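/- Let G=(V,E) with U⊆V and capacity function c. Let S⊆V with U⊆S be a capacitated dominating set with dominating function f_S satisfying |f_S⁻¹(v)|≤1 for all v∈V∖U. Then the auxiliary bipartite-like graph G' (with c(u) copies of each u∈U, edges from copies of u∈U to neighbours v∉U, and edges vw for v,w∉U with vw∈E and c(v)+c(w)>0) contains a matching M with |V| − |M| = |S|. -/

import Mathlib

open Finset

/-- The vertex set of the auxiliary graph `G'`: one vertex for each `v ∉ U`,
and `c u` copies of each `u ∈ U`. -/
def AuxVert {V : Type*} [DecidableEq V] (U : Finset V) (c : V → ℕ) : Type _ :=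
  {v : V // v ∉ U} ⊕ (Σ u : {u : V // u ∈ U}, Fin (c u.1))

/-- The auxiliary graph `G'`: copies of `u ∈ U` are joined to `v ∉ U` iff `uv ∈ E`;
for `v, w ∉ U`, `vw ∈ E'` iff `vw ∈ E` and `c v + c w > 0`; no edges between
copies of vertices of `U`. -/
def auxGraph {V : Type*} [DecidableEq V] (G : SimpleGraph V) (U : Finset V) (c : V → ℕ) :
    SimpleGraph (AuxVert U c) where
  Adj x y :=
    match x, y with
    | Sum.inl v, Sum.inl w => G.Adj v.1 w.1 ∧ 0 < c v.1 + c w.1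
    | Sum.inl v, Sum.inr ⟨u, _⟩ => G.Adj u.1 v.1
    | Sum.inr ⟨u, _⟩, Sum.inl v => G.Adj u.1 v.1
    | Sum.inr _, Sum.inr _ => False
  symm := by
    constructor
    rintro (v | ⟨u, i⟩) (w | ⟨u', j⟩) h
    · exact ⟨h.1.symm, by omega⟩
    · exact h
    · exact h
    · exact h
  loopless := by
    constructor
    rintro (v | ⟨u, i⟩) h
    · exact G.loopless.irrefl v.1 h.1
    · exact h

section Aux

variable {V : Type*} [Fintype V] [DecidableEq V]

/-- Index of `v` among the vertices outside `S` dominated by `f v`. -/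
noncomputable def idxP (S : Finset V) (f : V → V) (v : V) : ℕ :=
  List.idxOf v ((univ.filter (fun x => x ∉ S ∧ f x = f v)).toList)

lemma idxP_lt_card {S : Finset V} {f : V → V} {v : V} (hv : v ∉ S) :
    idxP S f v < (univ.filter (fun x => x ∉ S ∧ f x = f v)).card := by
  rw [idxP, ← Finset.length_toList, List.idxOf_lt_length_iff, Finset.mem_toList]
  simp [hv]

lemma idxP_inj {S : Finset V} {f : V → V} {v w : V} (hv : v ∉ S) (hw : w ∉ S)
    (hfvw : f v = f w) (h : idxP S f v = idxP S f w) : v = w := by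
  rw [idxP, idxP, hfvw] at h
  have hvm : v ∈ (univ.filter (fun x => x ∉ S ∧ f x = f w)).toList := by
    rw [Finset.mem_toList]; simp [hv, hfvw]
  have hwm : w ∈ (univ.filter (fun x => x ∉ S ∧ f x = f w)).toList := by
    rw [Finset.mem_toList]; simp [hw]
  exact (List.idxOf_inj hvm).mp h

/-- The partner of a vertex `v ∉ S` in the matching. -/
noncomputable def prt (U : Finset V) (c : V → ℕ) (S : Finset V) (f : V → V) (v : V)
    (hb : f v ∈ U → idxP S f v < c (f v)) : AuxVert U c :=
  if h : f v ∈ U then Sum.inr ⟨⟨f v, h⟩, ⟨idxP S f v, hb h⟩⟩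
  else Sum.inl ⟨f v, h⟩

lemma prt_ne_inl {U : Finset V} {c : V → ℕ} {S : Finset V} {f : V → V} {v : V}
    {hb : f v ∈ U → idxP S f v < c (f v)} (hfS : f v ∈ S)
    {w : V} (hwU : w ∉ U) (hwS : w ∉ S) :
    prt U c S f v hb ≠ Sum.inl ⟨w, hwU⟩ := by
  rw [prt]
  unfold AuxVert
  split
  · simp
  · intro h
    rw [Sum.inl.injEq, Subtype.mk.injEq] at h
    exact hwS (h ▸ hfS)

lemma prt_inj {U : Finset V} {c : V → ℕ} {S : Finset V} {f : V → V} {v w : V}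
    {hbv : f v ∈ U → idxP S f v < c (f v)} {hbw : f w ∈ U → idxP S f w < c (f w)}
    (hv : v ∉ S) (hw : w ∉ S)
    (hsimp : ∀ z, z ∉ U → (univ.filter (fun x => x ∉ S ∧ f x = z)).card ≤ 1)
    (h : prt U c S f v hbv = prt U c S f w hbw) : v = w := by
  rw [prt, prt] at h
  unfold AuxVert at h
  split at h <;> split at h
  · rename_i h1 h2
    rw [Sum.inr.injEq, Sigma.mk.inj_iff, Subtype.mk.injEq] at h
    obtain ⟨hfvw, hheq⟩ := h
    have hc : c (f v) = c (f w) := by rw [hfvw]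
    have : idxP S f v = idxP S f w := (Fin.heq_ext_iff hc).mp hheq
    exact idxP_inj hv hw hfvw this
  · exact absurd h (by simp)
  · exact absurd h (by simp)
  · rename_i h1 h2
    rw [Sum.inl.injEq, Subtype.mk.injEq] at h
    have := hsimp (f w) h2
    have hvm : v ∈ univ.filter (fun x => x ∉ S ∧ f x = f w) := by simp [hv, h]
    have hwm : w ∈ univ.filter (fun x => x ∉ S ∧ f x = f w) := by simp [hw]
    exact Finset.card_le_one.mp this v hvm w hwm

end Aux

/-- If `S ⊇ U` is a capacitated dominating set of `G` with dominating function `f`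
such that every `v ∉ U` dominates at most one vertex, then the auxiliary graph
contains a matching `M` with `|V| - |M| = |S|`. -/
theorem stmt_1 {V : Type*} [Fintype V] [DecidableEq V]
    (G : SimpleGraph V) [DecidableRel G.Adj]
    (U : Finset V) (c : V → ℕ) (S : Finset V) (f : V → V)
    (hUS : U ⊆ S)
    (hf : ∀ v, v ∉ S → f v ∈ S ∧ G.Adj v (f v))
    (hcap : ∀ w ∈ S, (univ.filter (fun v => v ∉ S ∧ f v = w)).card ≤ c w)
    (hsimp : ∀ w, w ∉ U → (univ.filter (fun v => v ∉ S ∧ f v = w)).card ≤ 1) :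
    ∃ M : SimpleGraph.Subgraph (auxGraph G U c),
      M.IsMatching ∧ Fintype.card V = M.edgeSet.ncard + S.card := by
  classical
  have hfS : ∀ v, v ∉ S → f v ∈ S := fun v hv => (hf v hv).1
  have hadj : ∀ v, v ∉ S → G.Adj v (f v) := fun v hv => (hf v hv).2
  have hb : ∀ v, v ∉ S → (f v ∈ U → idxP S f v < c (f v)) := by
    intro v hv hU
    calc idxP S f v < (univ.filter (fun x => x ∉ S ∧ f x = f v)).card := idxP_lt_card hv
    _ ≤ c (f v) := hcap _ (hfS v hv)
  have hcpos : ∀ v, v ∉ S → 0 < c (f v) := by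
    intro v hv
    have h1 : 0 < (univ.filter (fun x => x ∉ S ∧ f x = f v)).card :=
      Finset.card_pos.mpr ⟨v, by simp [hv]⟩
    exact lt_of_lt_of_le h1 (hcap _ (hfS v hv))
  -- the matching
  let M : (auxGraph G U c).Subgraph :=
  { verts := {x | ∃ v, ∃ hv : v ∉ S, x = Sum.inl ⟨v, fun h => hv (hUS h)⟩ ∨
      x = prt U c S f v (hb v hv)}
    Adj := fun x y => ∃ v, ∃ hv : v ∉ S,
      (x = Sum.inl ⟨v, fun h => hv (hUS h)⟩ ∧ y = prt U c S f v (hb v hv)) ∨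
      (y = Sum.inl ⟨v, fun h => hv (hUS h)⟩ ∧ x = prt U c S f v (hb v hv))
    adj_sub := by
      rintro x y ⟨v, hv, ⟨rfl, rfl⟩ | ⟨rfl, rfl⟩⟩
      · rw [prt]
        unfold AuxVert
        split
        · exact (hadj v hv).symm
        · refine ⟨hadj v hv, ?_⟩
          show 0 < c v + c (f v)
          have := hcpos v hv; omega
      · apply (auxGraph G U c).symm.symm
        rw [prt]
        unfold AuxVert
        split
        · exact (hadj v hv).symm
        · refine ⟨hadj v hv, ?_⟩
          show 0 < c v + c (f v)
          have := hcpos v hv; omega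
    edge_vert := by
      rintro x y ⟨v, hv, ⟨rfl, rfl⟩ | ⟨rfl, rfl⟩⟩
      · exact ⟨v, hv, Or.inl rfl⟩
      · exact ⟨v, hv, Or.inr rfl⟩
    symm := by
      constructor
      rintro x y ⟨v, hv, ⟨rfl, rfl⟩ | ⟨rfl, rfl⟩⟩
      · exact ⟨v, hv, Or.inr ⟨rfl, rfl⟩⟩
      · exact ⟨v, hv, Or.inl ⟨rfl, rfl⟩⟩ }
  have hAdj : ∀ x y, M.Adj x y ↔ ∃ v, ∃ hv : v ∉ S,
      (x = Sum.inl ⟨v, fun h => hv (hUS h)⟩ ∧ y = prt U c S f v (hb v hv)) ∨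
      (y = Sum.inl ⟨v, fun h => hv (hUS h)⟩ ∧ x = prt U c S f v (hb v hv)) :=
    fun _ _ => Iff.rfl
  have hVerts : ∀ x, x ∈ M.verts ↔ ∃ v, ∃ hv : v ∉ S,
      x = Sum.inl ⟨v, fun h => hv (hUS h)⟩ ∨ x = prt U c S f v (hb v hv) :=
    fun _ => Iff.rfl
  refine ⟨M, ?_, ?_⟩
  -- IsMatching
  · intro x hx
    rw [hVerts] at hx
    obtain ⟨v, hv, rfl | rfl⟩ := hx
    · refine ⟨prt U c S f v (hb v hv), (hAdj _ _).mpr ⟨v, hv, Or.inl ⟨rfl, rfl⟩⟩, ?_⟩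
      intro y hy
      replace hy := (hAdj _ _).mp hy
      obtain ⟨v', hv', ⟨h1, rfl⟩ | ⟨rfl, h2⟩⟩ := hy
      · unfold AuxVert at h1
        rw [Sum.inl.injEq, Subtype.mk.injEq] at h1
        subst h1
        rfl
      · exact absurd h2.symm (prt_ne_inl (hfS v' hv') _ hv)
    · refine ⟨Sum.inl ⟨v, fun h => hv (hUS h)⟩, (hAdj _ _).mpr ⟨v, hv, Or.inr ⟨rfl, rfl⟩⟩, ?_⟩
      intro y hy
      replace hy := (hAdj _ _).mp hy
      obtain ⟨v', hv', ⟨h1, rfl⟩ | ⟨rfl, h2⟩⟩ := hy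
      · exact absurd h1 (prt_ne_inl (hfS v hv) _ hv')
      · have := prt_inj hv hv' hsimp h2
        subst this
        rfl
  -- cardinality
  · have hEq : M.edgeSet = Set.range
        (fun p : {v : V // v ∉ S} =>
          s(Sum.inl ⟨p.1, fun h => p.2 (hUS h)⟩, prt U c S f p.1 (hb p.1 p.2))) := by
      ext e
      induction e using Sym2.ind with
      | _ x y =>
        rw [SimpleGraph.Subgraph.mem_edgeSet, hAdj]
        constructor
        · rintro ⟨v, hv, ⟨rfl, rfl⟩ | ⟨rfl, rfl⟩⟩
          · exact ⟨⟨v, hv⟩, rfl⟩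
          · exact ⟨⟨v, hv⟩, Sym2.eq_swap⟩
        · rintro ⟨⟨v, hv⟩, he⟩
          simp only at he
          replace he := Sym2.eq_iff.mp he
          rcases he with ⟨rfl, rfl⟩ | ⟨rfl, rfl⟩
          · exact ⟨v, hv, Or.inl ⟨rfl, rfl⟩⟩
          · exact ⟨v, hv, Or.inr ⟨rfl, rfl⟩⟩
    rw [hEq]
    have hinj : Function.Injective
        (fun p : {v : V // v ∉ S} =>
          s(Sum.inl ⟨p.1, fun h => p.2 (hUS h)⟩, prt U c S f p.1 (hb p.1 p.2))) := by
      rintro ⟨v, hv⟩ ⟨w, hw⟩ h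
      replace h := Sym2.eq_iff.mp h
      rcases h with ⟨h1, _⟩ | ⟨h1, h2⟩
      · rw [Sum.inl.injEq, Subtype.mk.injEq] at h1
        exact Subtype.ext h1
      · exact absurd h1.symm (prt_ne_inl (hfS w hw) _ hv)
    have hr : Set.range (fun p : {v : V // v ∉ S} =>
          s(Sum.inl ⟨p.1, fun h => p.2 (hUS h)⟩, prt U c S f p.1 (hb p.1 p.2)))
        = ↑((univ : Finset {v : V // v ∉ S}).image
          (fun p => s(Sum.inl ⟨p.1, fun h => p.2 (hUS h)⟩, prt U c S f p.1 (hb p.1 p.2)))) := by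
      rw [Finset.coe_image, Finset.coe_univ, Set.image_univ]
    erw [hr, Set.ncard_coe_finset, Finset.card_image_of_injective _ hinj, Finset.card_univ,
      Fintype.card_subtype]
    have h1 : (univ.filter (fun v : V => v ∉ S)).card = Fintype.card V - S.card := by
      rw [← Finset.card_compl]
      congr 1
      ext x
      simp
    have h2 : S.card ≤ Fintype.card V := Finset.card_le_univ S
    omega
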